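/- Let (X, ‖·‖) be a normed space and let G = (V, E) be a geometric 1-graph with V ⊆ X such that the closure of V is convex. Then for any u, v ∈ V with ‖u - v‖ ≥ 1, the graph distance satisfies d_G(u,v) = ⌊‖u - v‖⌋ + 1; and if ‖u - v‖ < 1, then d_G(u,v) = 0 if u = v, 1 if u ∼ v, and 2 otherwise. -/

import Mathlib

open scoped Classical

/-- Threshold 1: edges only between points at norm-distance less than 1. -/
def Threshold1 {X : Type*} [NormedAddCommGroup X] {V : Set X} (G : SimpleGraph V) : Prop :=
  ∀ u v : V, G.Adj u v → ‖(u : X) - v‖ < 1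

/-- Geometric existential closure at level 1. -/
def GEC {X : Type*} [NormedAddCommGroup X] {V : Set X} (G : SimpleGraph V) : Prop :=
  ∀ δ' : ℝ, 0 < δ' → δ' < 1 → ∀ x : V, ∀ A B : Finset V, Disjoint A B →
    (∀ w : V, w ∈ A ∨ w ∈ B → ‖(x : X) - w‖ < 1) →
    ∃ z : V, z ∉ A ∧ z ∉ B ∧ z ≠ x ∧
      (∀ a ∈ A, G.Adj z a) ∧ (∀ b ∈ B, ¬ G.Adj z b) ∧
      (∀ w : V, w ∈ A ∨ w ∈ B → ‖(z : X) - w‖ < 1) ∧ ‖(x : X) - z‖ < δ'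

section Aux

variable {X : Type*} [NormedAddCommGroup X] [NormedSpace ℝ X] {V : Set X} {G : SimpleGraph V}

/-- Any nonempty walk of length `n` joins vertices at norm-distance `< n`. -/
lemma norm_lt_length_of_walk (ht : Threshold1 G) :
    ∀ {a b : V} (w : G.Walk a b), w.length ≠ 0 → ‖(a : X) - b‖ < w.length := by
  intro a b w
  induction w with
  | nil => simp
  | @cons a c b h p ih =>
    intro _
    by_cases hp : p.length = 0
    · have hc : c = b := SimpleGraph.Walk.eq_of_length_eq_zero hp
      subst hc
      simpa [hp] using ht _ _ h
    · have h1 : ‖(a : X) - b‖ ≤ ‖(a : X) - c‖ + ‖(c : X) - b‖ := by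
        have := dist_triangle (a : X) (c : X) (b : X)
        simpa [dist_eq_norm] using this
      have h2 := ht _ _ h
      have h3 := ih hp
      simp only [SimpleGraph.Walk.length_cons]
      push_cast
      linarith

/-- A two-step walk between any two vertices at norm-distance `< 1`. -/
lemma exists_walk_two (hgec : GEC G) (u v : V) (h : ‖(u : X) - v‖ < 1) :
    ∃ w : G.Walk u v, w.length = 2 := by
  obtain ⟨z, -, -, -, hadj, -, -, -⟩ :=
    hgec (1/2) (by norm_num) (by norm_num) u {u, v} ∅ (Finset.disjoint_empty_right _)
      (by
        intro w hw
        rcases hw with hw | hw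
        · rcases Finset.mem_insert.1 hw with rfl | hw
          · simp
          · rw [Finset.mem_singleton] at hw; subst hw; exact h
        · simp at hw)
  refine ⟨SimpleGraph.Walk.cons (hadj u (Finset.mem_insert_self _ _)).symm
    (SimpleGraph.Walk.cons (hadj v (Finset.mem_insert_of_mem (Finset.mem_singleton_self _)))
      SimpleGraph.Walk.nil), rfl⟩

/-- Construction of a walk of length `⌊‖u - v‖⌋ + 1` when `‖u - v‖ ≥ 1`. -/
lemma exists_walk_floor (hconv : Convex ℝ (closure V)) (hgec : GEC G) (u v : V)
    (hD : 1 ≤ ‖(u : X) - v‖) :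
    ∃ w : G.Walk u v, w.length = ⌊‖(u : X) - v‖⌋₊ + 1 := by
  set D := ‖(u : X) - v‖ with hDdef
  set n := ⌊D⌋₊ with hn
  have hn1 : 1 ≤ n := Nat.le_floor (by exact_mod_cast hD)
  have hDpos : (0 : ℝ) < D := lt_of_lt_of_le one_pos hD
  have hnpos : (0 : ℝ) < (n : ℝ) + 1 := by positivity
  have hDlt : D < (n : ℝ) + 1 := Nat.lt_floor_add_one D
  set g := D / ((n : ℝ) + 1) with hg
  have hgpos : 0 < g := div_pos hDpos hnpos
  have hglt : g < 1 := (div_lt_one hnpos).2 hDlt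
  set ε := (1 - g) / 4 with hε
  have hεpos : 0 < ε := by rw [hε]; linarith
  have hεlt1 : ε < 1 := by rw [hε]; linarith
  set p : ℕ → X := fun i => (u : X) + ((i : ℝ) / ((n : ℝ) + 1)) • ((v : X) - u) with hp
  have hp0 : p 0 = (u : X) := by simp [hp]
  have hpmem : ∀ i : ℕ, i ≤ n + 1 → p i ∈ closure V := by
    intro i hi
    have hseg : p i ∈ segment ℝ (u : X) (v : X) := by
      rw [segment_eq_image']
      refine ⟨(i : ℝ) / ((n : ℝ) + 1), ⟨by positivity, ?_⟩, rfl⟩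
      rw [div_le_one hnpos]
      exact_mod_cast hi
    exact hconv.segment_subset (subset_closure u.2) (subset_closure v.2) hseg
  have hDrev : ‖(v : X) - u‖ = D := by rw [hDdef, norm_sub_rev]
  have hstep : ∀ i : ℕ, ‖p (i + 1) - p i‖ = g := by
    intro i
    have heq : p (i + 1) - p i = ((1 : ℝ) / ((n : ℝ) + 1)) • ((v : X) - u) := by
      simp only [hp]
      rw [add_sub_add_left_eq_sub, ← sub_smul]
      congr 1
      push_cast
      ring
    rw [heq, norm_smul, hDrev]
    rw [Real.norm_eq_abs, abs_of_pos (by positivity)]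
    rw [hg]; ring
  have hlast : ‖(v : X) - p n‖ = g := by
    have heq : (v : X) - p n = ((1 : ℝ) / ((n : ℝ) + 1)) • ((v : X) - u) := by
      simp only [hp]
      have : (v : X) - ((u : X) + ((n : ℝ) / ((n : ℝ) + 1)) • ((v : X) - u))
          = (1 - (n : ℝ) / ((n : ℝ) + 1)) • ((v : X) - u) := by
        rw [sub_smul, one_smul]
        abel
      rw [this]
      congr 1
      field_simp
      ring
    rw [heq, norm_smul, hDrev, Real.norm_eq_abs, abs_of_pos (by positivity)]
    rw [hg]; ring
  have happrox : ∀ i : ℕ, i ≤ n + 1 → ∃ x : V, ‖(x : X) - p i‖ < ε := by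
    intro i hi
    obtain ⟨y, hyV, hy⟩ := Metric.mem_closure_iff.1 (hpmem i hi) ε hεpos
    refine ⟨⟨y, hyV⟩, ?_⟩
    rw [← dist_eq_norm, dist_comm]
    exact hy
  have key : ∀ i : ℕ, i < n →
      ∃ (z : V) (w : G.Walk u z), w.length = i ∧ ‖(z : X) - p i‖ < 2 * ε := by
    intro i
    induction i with
    | zero =>
      intro _
      exact ⟨u, SimpleGraph.Walk.nil, rfl, by rw [hp0]; simpa using by linarith⟩
    | succ i ih =>
      intro hi
      obtain ⟨z, w, hwl, hz⟩ := ih (Nat.lt_of_succ_lt hi)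
      obtain ⟨x, hx⟩ := happrox (i + 1) (by omega)
      have hxz : ‖(x : X) - z‖ < 1 := by
        have t1 : ‖(x : X) - z‖ ≤ ‖(x : X) - p (i + 1)‖ + ‖p (i + 1) - p i‖ + ‖p i - (z : X)‖ := by
          have := dist_triangle4 ((x : X)) (p (i + 1)) (p i) ((z : X))
          simpa [dist_eq_norm] using this
        have t2 : ‖p i - (z : X)‖ < 2 * ε := by rw [norm_sub_rev]; exact hz
        have t3 := hstep i
        rw [t3] at t1
        linarith
      obtain ⟨z', -, -, -, hadj, -, -, hz'x⟩ :=
        hgec ε hεpos hεlt1 x {z} ∅ (Finset.disjoint_empty_right _)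
          (by
            intro w hw
            rcases hw with hw | hw
            · rw [Finset.mem_singleton] at hw; subst hw; exact hxz
            · simp at hw)
      refine ⟨z', w.concat (hadj z (Finset.mem_singleton_self _)).symm, by
        rw [SimpleGraph.Walk.length_concat, hwl], ?_⟩
      have t1 : ‖(z' : X) - p (i + 1)‖ ≤ ‖(z' : X) - x‖ + ‖(x : X) - p (i + 1)‖ := by
        have := dist_triangle ((z' : X)) ((x : X)) (p (i + 1))
        simpa [dist_eq_norm] using this
      have t2 : ‖(z' : X) - x‖ < ε := by rw [norm_sub_rev]; exact hz'x
      linarith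
  obtain ⟨z, w, hwl, hz⟩ := key (n - 1) (by omega)
  obtain ⟨x, hx⟩ := happrox n (by omega)
  have hn' : n - 1 + 1 = n := by omega
  have hxz : ‖(x : X) - z‖ < 1 := by
    have t1 : ‖(x : X) - z‖ ≤ ‖(x : X) - p n‖ + ‖p n - p (n - 1)‖ + ‖p (n - 1) - (z : X)‖ := by
      have := dist_triangle4 ((x : X)) (p n) (p (n - 1)) ((z : X))
      simpa [dist_eq_norm] using this
    have t2 : ‖p (n - 1) - (z : X)‖ < 2 * ε := by rw [norm_sub_rev]; exact hz
    have t3 : ‖p n - p (n - 1)‖ = g := by rw [← hn']; exact hstep (n - 1)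
    rw [t3] at t1
    linarith
  have hxv : ‖(x : X) - v‖ < 1 := by
    have t1 : ‖(x : X) - v‖ ≤ ‖(x : X) - p n‖ + ‖p n - (v : X)‖ := by
      have := dist_triangle ((x : X)) (p n) ((v : X))
      simpa [dist_eq_norm] using this
    have t2 : ‖p n - (v : X)‖ = g := by rw [norm_sub_rev]; exact hlast
    rw [t2] at t1
    linarith
  obtain ⟨z', -, -, -, hadj, -, -, -⟩ :=
    hgec ε hεpos hεlt1 x {z, v} ∅ (Finset.disjoint_empty_right _)
      (by
        intro w hw
        rcases hw with hw | hw
        · rcases Finset.mem_insert.1 hw with rfl | hw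
          · exact hxz
          · rw [Finset.mem_singleton] at hw; subst hw; exact hxv
        · simp at hw)
  refine ⟨(w.concat (hadj z (Finset.mem_insert_self _ _)).symm).concat
    (hadj v (Finset.mem_insert_of_mem (Finset.mem_singleton_self _))), ?_⟩
  rw [SimpleGraph.Walk.length_concat, SimpleGraph.Walk.length_concat, hwl]
  omega

end Aux

/-- in a geometric 1-graph with convex closure of the vertex set, the graph
distance of `u, v` with `‖u - v‖ ≥ 1` is `⌊‖u - v‖⌋ + 1`, while for `‖u - v‖ < 1` it is
0, 1 or 2 according as `u = v`, `u ∼ v`, or neither. -/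
theorem graph_dist_of_geometric_one_graph
    {X : Type*} [NormedAddCommGroup X] [NormedSpace ℝ X]
    (V : Set X) (hVc : V.Countable) (hconv : Convex ℝ (closure V))
    (G : SimpleGraph V) (ht : Threshold1 G) (hgec : GEC G) (u v : V) :
    (1 ≤ ‖(u : X) - v‖ → G.dist u v = ⌊‖(u : X) - v‖⌋₊ + 1) ∧
    (‖(u : X) - v‖ < 1 →
      G.dist u v = if u = v then 0 else if G.Adj u v then 1 else 2) := by
  constructor
  · intro hD
    obtain ⟨w, hwl⟩ := exists_walk_floor hconv hgec u v hD
    have hle : G.dist u v ≤ ⌊‖(u : X) - v‖⌋₊ + 1 := hwl ▸ SimpleGraph.dist_le w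
    have hne : u ≠ v := by
      intro h
      rw [h] at hD
      simp at hD
      linarith
    have hreach : G.Reachable u v := ⟨w⟩
    have hd0 : G.dist u v ≠ 0 := (hreach.pos_dist_of_ne hne).ne'
    obtain ⟨w', hw'⟩ := hreach.exists_walk_length_eq_dist
    have hlt := norm_lt_length_of_walk ht w' (by rw [hw']; exact hd0)
    rw [hw'] at hlt
    have hfl : (⌊‖(u : X) - v‖⌋₊ : ℝ) ≤ ‖(u : X) - v‖ := Nat.floor_le (norm_nonneg _)
    have hge : (⌊‖(u : X) - v‖⌋₊ : ℝ) < (G.dist u v : ℝ) := lt_of_le_of_lt hfl hlt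
    have hge' : ⌊‖(u : X) - v‖⌋₊ < G.dist u v := by exact_mod_cast hge
    omega
  · intro hD
    by_cases h1 : u = v
    · simp [h1]
    by_cases h2 : G.Adj u v
    · rw [if_neg h1, if_pos h2]
      exact SimpleGraph.dist_eq_one_iff_adj.2 h2
    · obtain ⟨w, hwl⟩ := exists_walk_two hgec u v hD
      have hle : G.dist u v ≤ 2 := hwl ▸ SimpleGraph.dist_le w
      have hreach : G.Reachable u v := ⟨w⟩
      have hpos := hreach.pos_dist_of_ne h1
      have hne1 : G.dist u v ≠ 1 := fun h => h2 (SimpleGraph.dist_eq_one_iff_adj.1 h)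
      rw [if_neg h1, if_neg h2]
      omega
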